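/- Let (S,*) be an adequate partial semigroup and let p ∈ δS. The following are equivalent: (a) p is in the smallest (two-sided) ideal K(δS) of δS; (b) for all A ∈ p, the set {x ∈ S : x⁻¹A ∈ p} is syndetic; (c) for all q ∈ δS, p ∈ δS*q*p. -/

import Mathlib

/-- A partial semigroup: `mul` is partially defined (`none` = undefined), and
associativity holds in the strong sense: either side is defined iff the other is,
and then they agree. -/
structure PartialSemigroup (S : Type*) where
  mul : S → S → Option S
  assoc : ∀ a b c : S,
    (mul a b).bind (fun x => mul x c) = (mul b c).bind (fun y => mul a y)

namespace PartialSemigroup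

variable {S : Type*} (P : PartialSemigroup S)

/-- φ(a) = {t : a*t is defined}. -/
def phi (a : S) : Set S := {t | (P.mul a t).isSome}

/-- σ(H) = ⋂_{s ∈ H} φ(s). -/
def sigma (H : Set S) : Set S := ⋂ s ∈ H, P.phi s

/-- a⁻¹A = {t ∈ φ(a) : a*t ∈ A}. -/
def invImg (a : S) (A : Set S) : Set S :=
  {t | ∃ v, P.mul a t = some v ∧ v ∈ A}

/-- An adequate partial semigroup: σ(H) ≠ ∅ for every finite nonempty H. -/
def Adequate : Prop :=
  ∀ H : Finset S, H.Nonempty → (P.sigma ↑H).Nonempty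

/-- δS: ultrafilters containing every φ(x). -/
def mem_delta (q : Ultrafilter S) : Prop := ∀ x : S, P.phi x ∈ q

/-- Product of a nonempty list, associated to the left; `none` if empty or undefined. -/
def listProd : List S → Option S
  | [] => none
  | a :: l => l.foldl (fun acc b => acc.bind (fun x => P.mul x b)) (some a)

/-- ∏_{t ∈ H} f(t) in increasing order of indices. -/
def finProd (f : ℕ → S) (H : Finset ℕ) : Option S :=
  P.listProd ((H.sort (· ≤ ·)).map f)

/-- Product of a list of partially defined elements. -/
def optProd : List (Option S) → Option S
  | [] => none
  | o :: l => l.foldl (fun acc b => acc.bind (fun x => b.bind (fun y => P.mul x y))) o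

/-- An adequate sequence. -/
def AdequateSeq (f : ℕ → S) : Prop :=
  (∀ H : Finset ℕ, H.Nonempty → (P.finProd f H).isSome) ∧
  (∀ F : Finset S, F.Nonempty → ∃ m : ℕ,
    ∀ H : Finset ℕ, H.Nonempty → (∀ n ∈ H, m ≤ n) →
      ∀ v, P.finProd f H = some v → v ∈ P.sigma ↑F)

/-- The interleaved product (∏_{i=1}^m a(i)*f(t(i)))*a(m+1). -/
def jProd {m : ℕ} (a : Fin (m + 1) → S) (t : Fin m → ℕ) (f : ℕ → S) : Option S :=
  P.listProd
    ((((List.finRange m).map (fun i => [a i.castSucc, f (t i)])).flatten) ++ [a (Fin.last m)])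

/-- J-sets. -/
def IsJSet (A : Set S) : Prop :=
  ∀ F : Finset (ℕ → S), F.Nonempty → (∀ f ∈ F, P.AdequateSeq f) →
    ∀ L : Finset S, L.Nonempty →
      ∃ m : ℕ, 0 < m ∧ ∃ a : Fin (m + 1) → S, ∃ t : Fin m → ℕ, StrictMono t ∧
        ∀ f ∈ F, ∃ v, P.jProd a t f = some v ∧ v ∈ A ∩ P.sigma ↑L

end PartialSemigroup

namespace PartialSemigroup
variable {S : Type*} (P : PartialSemigroup S)

/-- A syndetic subset of a partial semigroup. -/
def Syndetic (A : Set S) : Prop :=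
  ∃ H : Finset S, H.Nonempty ∧ P.sigma ↑H ⊆ ⋃ t ∈ H, P.invImg t A

end PartialSemigroup

namespace PartialSemigroup
variable {S : Type*} (P : PartialSemigroup S)

/-- `I` is a (two-sided) ideal of `δS` (with respect to the operation `star`). -/
def IsIdeal (star : {q : Ultrafilter S // P.mem_delta q} → {q : Ultrafilter S // P.mem_delta q} →
      {q : Ultrafilter S // P.mem_delta q})
    (I : Set {q : Ultrafilter S // P.mem_delta q}) : Prop :=
  I.Nonempty ∧ ∀ p ∈ I, ∀ q, star p q ∈ I ∧ star q p ∈ I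

/-- `K` is the smallest (two-sided) ideal of `δS`. -/
def IsSmallestIdeal (star : {q : Ultrafilter S // P.mem_delta q} →
      {q : Ultrafilter S // P.mem_delta q} → {q : Ultrafilter S // P.mem_delta q})
    (K : Set {q : Ultrafilter S // P.mem_delta q}) : Prop :=
  P.IsIdeal star K ∧ ∀ I, P.IsIdeal star I → K ⊆ I

end PartialSemigroup
namespace PartialSemigroup

section Aux
variable {S : Type*} {P : PartialSemigroup S}

lemma mem_phi_iff {a t : S} : t ∈ P.phi a ↔ ∃ v, P.mul a t = some v := by
  simp [phi, Option.isSome_iff_exists]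

lemma mul_left_isSome' {f t x w : S} (h : P.mul t x = some w) (h2 : (P.mul f w).isSome) :
    (P.mul f t).isSome := by
  have ha := P.assoc f t x
  rw [h] at ha
  simp only [Option.bind_some] at ha
  cases hft : P.mul f t with
  | none => rw [hft] at ha; simp only [Option.bind_none] at ha; rw [← ha] at h2; simp at h2
  | some _ => simp

lemma invImg_invImg' {a x v : S} (h : P.mul a x = some v) (A : Set S) :
    P.invImg x (P.invImg a A) = P.invImg v A := by
  have ha := P.assoc a x
  ext t
  have h2 := ha t
  rw [h, Option.bind_some] at h2
  constructor
  · rintro ⟨u, hu, w, hw, hwA⟩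
    refine ⟨w, ?_, hwA⟩
    rw [h2, hu, Option.bind_some, hw]
  · rintro ⟨w, hw, hwA⟩
    rw [h2] at hw
    obtain ⟨u, hu, hau⟩ := Option.bind_eq_some_iff.mp hw
    exact ⟨u, hu, w, hau, hwA⟩

lemma invImg_mono' {a : S} {A B : Set S} (h : A ⊆ B) : P.invImg a A ⊆ P.invImg a B := by
  rintro t ⟨v, hv, hvA⟩; exact ⟨v, hv, h hvA⟩

lemma sigma_anti' {H₁ H₂ : Set S} (h : H₁ ⊆ H₂) : P.sigma H₂ ⊆ P.sigma H₁ := by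
  intro x hx
  exact Set.mem_iInter₂.2 fun s hs => Set.mem_iInter₂.1 hx s (h hs)

lemma mem_sigma' {H : Set S} {x : S} : x ∈ P.sigma H ↔ ∀ s ∈ H, x ∈ P.phi s := by
  simp [sigma]

lemma sigma_mem_of_delta {q : Ultrafilter S} (hq : P.mem_delta q) (H : Finset S) :
    P.sigma ↑H ∈ q := by
  have : P.sigma (↑H : Set S) = ⋂ s ∈ H, P.phi s := by
    simp [sigma]
  rw [this]
  exact (Filter.biInter_finset_mem H).2 fun s _ => hq s

lemma exists_delta_mem {C : Set S}
    (h : ∀ F : Finset S, (C ∩ P.sigma ↑F).Nonempty) :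
    ∃ u : Ultrafilter S, P.mem_delta u ∧ C ∈ u := by
  classical
  have hdir : Directed (· ≥ ·) fun F : Finset S => Filter.principal (C ∩ P.sigma ↑F) := by
    intro F₁ F₂
    refine ⟨F₁ ∪ F₂, ?_, ?_⟩ <;>
    · refine Filter.principal_mono.2 (Set.inter_subset_inter_right _ (sigma_anti' ?_))
      simp [Finset.coe_union]
  have hne : (⨅ F : Finset S, Filter.principal (C ∩ P.sigma ↑F)).NeBot :=
    Filter.iInf_neBot_of_directed' hdir fun F => Filter.principal_neBot_iff.2 (h F)
  obtain ⟨u, hu⟩ := Ultrafilter.exists_le (⨅ F : Finset S, Filter.principal (C ∩ P.sigma ↑F))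
  have hmem : ∀ F : Finset S, C ∩ P.sigma ↑F ∈ u := fun F =>
    hu (Filter.mem_iInf_of_mem F (Filter.mem_principal_self _))
  refine ⟨u, fun x => ?_, Filter.mem_of_superset (hmem ∅) Set.inter_subset_left⟩
  refine Filter.mem_of_superset (hmem {x}) ?_
  intro y hy
  have := hy.2
  rw [mem_sigma'] at this
  exact this x (by simp)

lemma isClosed_delta (P : PartialSemigroup S) :
    IsClosed {u : Ultrafilter S | P.mem_delta u} := by
  have : {u : Ultrafilter S | P.mem_delta u} = ⋂ x : S, {u | P.phi x ∈ u} := by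
    ext u; simp [mem_delta]
  rw [this]
  exact isClosed_iInter fun x => ultrafilter_isClosed_basic _

end Aux

end PartialSemigroup
namespace PartialSemigroup

section Star
variable {S : Type*} {P : PartialSemigroup S}
  (star : {q : Ultrafilter S // P.mem_delta q} → {q : Ultrafilter S // P.mem_delta q} →
      {q : Ultrafilter S // P.mem_delta q})
  (hstar : ∀ p q (A : Set S), A ∈ (star p q).1 ↔ {a : S | P.invImg a A ∈ q.1} ∈ p.1)

include hstar

lemma star_assoc' (p q r : {q : Ultrafilter S // P.mem_delta q}) :
    star (star p q) r = star p (star q r) := by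
  apply Subtype.ext
  apply Ultrafilter.coe_injective
  apply Filter.ext
  intro A
  simp only [Ultrafilter.mem_coe]
  rw [hstar, hstar, hstar]
  have hsets : {b : S | P.invImg b {a : S | P.invImg a A ∈ r.1} ∈ q.1} =
      {b : S | {a : S | P.invImg a (P.invImg b A) ∈ r.1} ∈ q.1} := by
    ext b
    simp only [Set.mem_setOf_eq]
    have hφ : P.phi b ∈ q.1 := q.2 b
    have hagree : P.invImg b {a : S | P.invImg a A ∈ r.1} ∩ P.phi b =
        {a : S | P.invImg a (P.invImg b A) ∈ r.1} ∩ P.phi b := by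
      ext x
      simp only [Set.mem_inter_iff, Set.mem_setOf_eq, and_congr_left_iff]
      intro hx
      obtain ⟨v, hv⟩ := mem_phi_iff.1 hx
      constructor
      · rintro ⟨w, hw, hwr⟩
        rw [hv] at hw
        cases hw
        rwa [invImg_invImg' hv]
      · intro hr
        rw [invImg_invImg' hv] at hr
        exact ⟨v, hv, hr⟩
    constructor
    · intro h1
      have h2 : P.invImg b {a : S | P.invImg a A ∈ r.1} ∩ P.phi b ∈ q.1 :=
        Filter.inter_mem h1 hφ
      rw [hagree] at h2
      exact Filter.mem_of_superset h2 Set.inter_subset_left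
    · intro h1
      have h2 : {a : S | P.invImg a (P.invImg b A) ∈ r.1} ∩ P.phi b ∈ q.1 :=
        Filter.inter_mem h1 hφ
      rw [← hagree] at h2
      exact Filter.mem_of_superset h2 Set.inter_subset_left
  rw [hsets, show {a : S | P.invImg a A ∈ (star q r).1} =
      {b : S | {a : S | P.invImg a (P.invImg b A) ∈ r.1} ∈ q.1} from
    Set.ext fun b => hstar q r _]

lemma continuous_rho' (m : {q : Ultrafilter S // P.mem_delta q}) :
    Continuous fun r : {q : Ultrafilter S // P.mem_delta q} => star r m := by
  apply continuous_induced_rng.2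
  apply continuous_generateFrom_iff.mpr
  rintro s ⟨A, rfl⟩
  have hpre : ((fun r : {q : Ultrafilter S // P.mem_delta q} =>
        ((star r m : {q : Ultrafilter S // P.mem_delta q}) : Ultrafilter S)) ⁻¹'
        {u : Ultrafilter S | A ∈ u}) =
      Subtype.val ⁻¹' {u : Ultrafilter S | {a : S | P.invImg a A ∈ m.1} ∈ u} := by
    ext r
    simp only [Set.mem_preimage, Set.mem_setOf_eq]
    exact hstar r m A
  show IsOpen ((fun r : {q : Ultrafilter S // P.mem_delta q} =>
      ((star r m : {q : Ultrafilter S // P.mem_delta q}) : Ultrafilter S)) ⁻¹'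
      {u : Ultrafilter S | A ∈ u})
  rw [hpre]
  exact (ultrafilter_isOpen_basic _).preimage continuous_subtype_val

end Star

end PartialSemigroup
open PartialSemigroup in
/-- For `p ∈ δS`, TFAE: (a) `p ∈ K(δS)`; (b) for all `A ∈ p`,
`{x : x⁻¹A ∈ p}` is syndetic; (c) for all `q ∈ δS`, `p ∈ δS*q*p`. -/
theorem stmt9 {S : Type*} (P : PartialSemigroup S) (hP : P.Adequate)
    (star : {q : Ultrafilter S // P.mem_delta q} → {q : Ultrafilter S // P.mem_delta q} →
      {q : Ultrafilter S // P.mem_delta q})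
    (hstar : ∀ p q (A : Set S),
      A ∈ (star p q).1 ↔ {a : S | P.invImg a A ∈ q.1} ∈ p.1)
    (K : Set {q : Ultrafilter S // P.mem_delta q}) (hK : P.IsSmallestIdeal star K)
    (p : {q : Ultrafilter S // P.mem_delta q}) :
    (p ∈ K ↔ ∀ A : Set S, A ∈ p.1 → P.Syndetic {x : S | P.invImg x A ∈ p.1}) ∧
    (p ∈ K ↔ ∀ q, ∃ r, star (star r q) p = p) := by
  classical
  have hassoc := star_assoc' star hstar
  haveI hcomp : CompactSpace {q : Ultrafilter S // P.mem_delta q} :=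
    isCompact_iff_compactSpace.mp (P.isClosed_delta.isCompact)
  obtain ⟨e, he⟩ := hK.1.1
  have hSne : Nonempty S := Filter.nonempty_of_neBot (p.1 : Filter S)
  -- (c) implies (a)
  have hca : (∀ q, ∃ r, star (star r q) p = p) → p ∈ K := by
    intro hc
    obtain ⟨r, hr⟩ := hc e
    have h1 : star r e ∈ K := (hK.1.2 e he r).2
    have h2 : star (star r e) p ∈ K := (hK.1.2 _ h1 p).1
    rwa [hr] at h2
  -- (a) implies (c)
  have hac : p ∈ K → ∀ q, ∃ r, star (star r q) p = p := by
    intro hpK q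
    set F : Set (Set {q : Ultrafilter S // P.mem_delta q}) :=
      {T | T.Nonempty ∧ IsClosed T ∧ ∀ x ∈ T, ∀ r, star r x ∈ T} with hFdef
    have hrangeF : ∀ m, Set.range (fun r => star r m) ∈ F := by
      intro m
      refine ⟨⟨star e m, e, rfl⟩, ?_, ?_⟩
      · rw [← Set.image_univ]
        exact (isCompact_univ.image (continuous_rho' star hstar m)).isClosed
      · rintro _ ⟨x, rfl⟩ r
        exact ⟨star r x, show star (star r x) m = star r (star x m) from hassoc r x m⟩
    have hchain : ∀ c ⊆ F, IsChain (· ⊆ ·) c → c.Nonempty → ∃ lb ∈ F, ∀ s ∈ c, lb ⊆ s := by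
      intro c hcF hch hcne
      refine ⟨⋂₀ c, ⟨?_, ?_, ?_⟩, fun s hs => Set.sInter_subset_of_mem hs⟩
      · haveI : Nonempty c := hcne.to_subtype
        rw [Set.sInter_eq_iInter]
        apply IsCompact.nonempty_iInter_of_directed_nonempty_isCompact_isClosed
        · intro i j
          rcases eq_or_ne i.1 j.1 with h | h
          · exact ⟨i, Set.Subset.rfl, h ▸ Set.Subset.rfl⟩
          · rcases hch i.2 j.2 (by exact fun hij => h (by exact_mod_cast hij)) with h1 | h1
            · exact ⟨i, Set.Subset.rfl, h1⟩
            · exact ⟨j, h1, Set.Subset.rfl⟩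
        · exact fun i => (hcF i.2).1
        · exact fun i => (hcF i.2).2.1.isCompact
        · exact fun i => (hcF i.2).2.1
      · exact isClosed_sInter fun T hT => (hcF hT).2.1
      · intro x hx r
        intro T hT
        exact (hcF hT).2.2 x (hx T hT) r
    have hmin_image : ∀ T, Minimal (· ∈ F) T → ∀ q',
        Minimal (· ∈ F) ((fun x => star x q') '' T) := by
      intro T hT q'
      constructor
      · refine ⟨hT.1.1.image _, ?_, ?_⟩
        · exact ((hT.1.2.1.isCompact).image (continuous_rho' star hstar q')).isClosed
        · rintro _ ⟨x, hxT, rfl⟩ r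
          exact ⟨star r x, hT.1.2.2 x hxT r,
            show star (star r x) q' = star r (star x q') from hassoc r x q'⟩
      · intro T' hT' hT'sub
        have hsep : {x | x ∈ T ∧ star x q' ∈ T'} ∈ F := by
          refine ⟨?_, ?_, ?_⟩
          · obtain ⟨t', ht'⟩ := hT'.1
            obtain ⟨x, hxT, hxe⟩ := hT'sub ht'
            have hxe' : star x q' = t' := hxe
            exact ⟨x, hxT, hxe' ▸ ht'⟩
          · exact (hT.1.2.1).inter (hT'.2.1.preimage (continuous_rho' star hstar q'))
          · rintro x ⟨hx1, hx2⟩ r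
            refine ⟨hT.1.2.2 x hx1 r, ?_⟩
            rw [hassoc]
            exact hT'.2.2 _ hx2 r
        have hsub2 : T ⊆ {x | x ∈ T ∧ star x q' ∈ T'} :=
          hT.2 hsep (fun x hx => hx.1)
        rintro _ ⟨x, hxT, rfl⟩
        exact (hsub2 hxT).2
    set U : Set {q : Ultrafilter S // P.mem_delta q} :=
      {y | ∃ T, Minimal (· ∈ F) T ∧ y ∈ T} with hUdef
    have hUideal : P.IsIdeal star U := by
      constructor
      · obtain ⟨M, -, hM⟩ := zorn_superset_nonempty F hchain _ (hrangeF e)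
        obtain ⟨x, hx⟩ := hM.1.1
        exact ⟨x, M, hM, hx⟩
      · rintro y ⟨T, hT, hyT⟩ q'
        exact ⟨⟨_, hmin_image T hT q', ⟨y, hyT, rfl⟩⟩, ⟨T, hT, hT.1.2.2 y hyT q'⟩⟩
    obtain ⟨T, hT, hpT⟩ := hK.2 U hUideal hpK
    have hsub : Set.range (fun r => star r (star q p)) ⊆ T := by
      rintro _ ⟨r, rfl⟩
      show star r (star q p) ∈ T
      rw [← hassoc]
      exact hT.1.2.2 p hpT (star r q)
    obtain ⟨r, hr⟩ := hT.2 (hrangeF (star q p)) hsub hpT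
    exact ⟨r, by rw [hassoc]; exact hr⟩
  -- (c) implies (b)
  have hcb : (∀ q, ∃ r, star (star r q) p = p) →
      ∀ A : Set S, A ∈ p.1 → P.Syndetic {x : S | P.invImg x A ∈ p.1} := by
    intro hc A hA
    by_contra hsyn
    rw [Syndetic] at hsyn
    push_neg at hsyn
    have hne : ∀ H : Finset S, H.Nonempty →
        (P.sigma ↑H \ ⋃ t ∈ H, P.invImg t {x : S | P.invImg x A ∈ p.1}).Nonempty := by
      intro H hH
      obtain ⟨y, hy1, hy2⟩ := Set.not_subset.1 (hsyn H hH)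
      exact ⟨y, hy1, hy2⟩
    obtain ⟨x₀⟩ := hSne
    haveI : Nonempty {H : Finset S // H.Nonempty} := ⟨⟨{x₀}, Finset.singleton_nonempty x₀⟩⟩
    set G : {H : Finset S // H.Nonempty} → Set S := fun H =>
      P.sigma ↑H.1 \ ⋃ t ∈ H.1, P.invImg t {x : S | P.invImg x A ∈ p.1} with hGdef
    have hdir : Directed (· ≥ ·) fun i => Filter.principal (G i) := by
      intro i j
      obtain ⟨a, ha⟩ := i.2
      refine ⟨⟨i.1 ∪ j.1, ⟨a, Finset.mem_union_left _ ha⟩⟩, ?_, ?_⟩ <;>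
      · refine Filter.principal_mono.2 (Set.diff_subset_diff (sigma_anti' ?_) ?_)
        · simp
        · intro z hz
          rw [Set.mem_iUnion₂] at hz ⊢
          obtain ⟨t, ht1, ht2⟩ := hz
          exact ⟨t, by simp [Finset.mem_union, ht1], ht2⟩
    haveI hfne : (⨅ i, Filter.principal (G i)).NeBot :=
      Filter.iInf_neBot_of_directed' hdir fun i => Filter.principal_neBot_iff.2 (hne i.1 i.2)
    obtain ⟨q, hq⟩ := Ultrafilter.exists_le (⨅ i, Filter.principal (G i))
    have hGq : ∀ i, G i ∈ q := fun i => hq (Filter.mem_iInf_of_mem i (Filter.mem_principal_self _))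
    have hqD : P.mem_delta q := by
      intro x
      refine Filter.mem_of_superset (hGq ⟨{x}, Finset.singleton_nonempty x⟩) ?_
      intro y hy
      have h2 := hy.1
      rw [mem_sigma'] at h2
      exact h2 x (by simp)
    obtain ⟨r, hr⟩ := hc ⟨q, hqD⟩
    have hAp : A ∈ (star (star r ⟨q, hqD⟩) p).1 := by rw [hr]; exact hA
    rw [hstar, hstar] at hAp
    obtain ⟨t, ht⟩ := Ultrafilter.nonempty_of_mem hAp
    have htq : P.invImg t {x : S | P.invImg x A ∈ p.1} ∈ q := ht
    have hGt := hGq ⟨{t}, Finset.singleton_nonempty t⟩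
    obtain ⟨y, hy1, hy2⟩ := Ultrafilter.nonempty_of_mem (Filter.inter_mem htq hGt)
    exact hy2.2 (Set.mem_iUnion₂.2 ⟨t, Finset.mem_singleton_self t, hy1⟩)
  -- (b) implies (c)
  have hbc : (∀ A : Set S, A ∈ p.1 → P.Syndetic {x : S | P.invImg x A ∈ p.1}) →
      ∀ q, ∃ r, star (star r q) p = p := by
    intro hb q
    have perA : ∀ A ∈ p.1, ∃ r : {q : Ultrafilter S // P.mem_delta q},
        {a : S | P.invImg a A ∈ (star q p).1} ∈ r.1 := by
      intro A hA
      by_contra h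
      push_neg at h
      have hF : ∃ F : Finset S, ({a : S | P.invImg a A ∈ (star q p).1} ∩ P.sigma ↑F) = ∅ := by
        by_contra hF
        push_neg at hF
        obtain ⟨u, huD, huC⟩ := exists_delta_mem
          (C := {a : S | P.invImg a A ∈ (star q p).1})
          (fun F => hF F)
        exact h ⟨u, huD⟩ huC
      obtain ⟨F, hFe⟩ := hF
      have hA' : A ∩ P.sigma ↑F ∈ p.1 := Filter.inter_mem hA (sigma_mem_of_delta p.2 F)
      obtain ⟨H, hH, hHsub⟩ := hb _ hA'
      have hB'σ : {x : S | P.invImg x (A ∩ P.sigma ↑F) ∈ p.1} ⊆ P.sigma ↑F := by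
        intro x hx
        obtain ⟨y, v, hv, hvA⟩ := Ultrafilter.nonempty_of_mem hx
        rw [mem_sigma']
        intro f hf
        have hfv : (P.mul f v).isSome := by
          have h2 := hvA.2
          rw [mem_sigma'] at h2
          exact h2 f hf
        rw [mem_phi_iff]
        rw [← Option.isSome_iff_exists]
        exact mul_left_isSome' hv hfv
      have h1 : (⋃ t ∈ H, P.invImg t {x : S | P.invImg x (A ∩ P.sigma ↑F) ∈ p.1}) ∈ q.1 :=
        Filter.mem_of_superset (sigma_mem_of_delta q.2 H) hHsub
      obtain ⟨t, htH, htB⟩ := (Ultrafilter.finite_biUnion_mem_iff H.finite_toSet).mp h1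
      have htσ : t ∈ P.sigma ↑F := by
        obtain ⟨x₀, v₀, hv₀, hv₀B⟩ := Ultrafilter.nonempty_of_mem htB
        rw [mem_sigma']
        intro f hf
        have h3 : (P.mul f v₀).isSome := by
          have h2 := hB'σ hv₀B
          rw [mem_sigma'] at h2
          have := h2 f hf
          rwa [mem_phi_iff, ← Option.isSome_iff_exists] at this
        rw [mem_phi_iff, ← Option.isSome_iff_exists]
        exact mul_left_isSome' hv₀ h3
      have htm : P.invImg t A ∈ (star q p).1 := by
        rw [hstar]
        refine Filter.mem_of_superset htB ?_
        rintro x ⟨v, hv, hvB⟩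
        show P.invImg x (P.invImg t A) ∈ p.1
        rw [invImg_invImg' hv]
        exact Filter.mem_of_superset hvB (invImg_mono' Set.inter_subset_left)
      have hmem : t ∈ ({a : S | P.invImg a A ∈ (star q p).1} ∩ P.sigma ↑F) := ⟨htm, htσ⟩
      rw [hFe] at hmem
      exact hmem
    set Z : {A : Set S // A ∈ p.1} → Set {q : Ultrafilter S // P.mem_delta q} := fun A =>
      {r | {a : S | P.invImg a A.1 ∈ (star q p).1} ∈ r.1} with hZdef
    haveI : Nonempty {A : Set S // A ∈ p.1} := ⟨⟨Set.univ, Filter.univ_mem⟩⟩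
    have hZcl : ∀ A, IsClosed (Z A) := fun A =>
      (ultrafilter_isClosed_basic {a : S | P.invImg a A.1 ∈ (star q p).1}).preimage
        continuous_subtype_val
    have hZdir : Directed (· ⊇ ·) Z := by
      rintro A A'
      refine ⟨⟨A.1 ∩ A'.1, Filter.inter_mem A.2 A'.2⟩, ?_, ?_⟩ <;>
      · intro r hr
        refine Filter.mem_of_superset hr ?_
        intro a ha
        refine Filter.mem_of_superset ha (invImg_mono' ?_)
        first
          | exact Set.inter_subset_left
          | exact Set.inter_subset_right
    obtain ⟨r, hr⟩ := IsCompact.nonempty_iInter_of_directed_nonempty_isCompact_isClosed Z hZdir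
      (fun A => perA A.1 A.2) (fun A => (hZcl A).isCompact) hZcl
    rw [Set.mem_iInter] at hr
    have hle : ((star r (star q p)).1 : Filter S) ≤ (p.1 : Filter S) := by
      rw [Filter.le_def]
      intro s hs
      rw [Ultrafilter.mem_coe] at hs ⊢
      exact (hstar r (star q p) s).2 (hr ⟨s, hs⟩)
    have heq : star r (star q p) = p :=
      Subtype.ext (Ultrafilter.coe_injective (p.1.unique hle))
    exact ⟨r, by rw [hassoc]; exact heq⟩
  exact ⟨⟨fun h => hcb (hac h), fun h => hca (hbc h)⟩, hac, hca⟩
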